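/- Let r ≤ 1 be an integer coprime with 3 and p > 3 a prime with p ≡ -r (mod 3) and p ≥ 3 - r. Then Σ_{j=1}^{(2p-r)/3} 1/j ≡ Σ_{j=1}^{(p+r-3)/3} 1/j (mod p) in ℤ_p. -/

import Mathlib

/-- Under the hypotheses of Theorem 1.1, with `n = (2p-r)/3` and
`m = (p+r-3)/3`, one has `Σ_{j=1}^{(2p-r)/3} 1/j ≡ Σ_{j=1}^{(p+r-3)/3} 1/j (mod p)` in `ℤ_p`. -/
theorem stmt14 (p : ℕ) [Fact p.Prime] (hp3 : 3 < p)
    (r : ℤ) (hr : r ≤ 1) (hr3 : IsCoprime r 3)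
    (hpr : (p : ℤ) ≡ -r [ZMOD 3]) (hpge : 3 - r ≤ (p : ℤ))
    (n m : ℕ) (hn : (n : ℤ) * 3 = 2 * p - r) (hm : (m : ℤ) * 3 = p + r - 3) :
    (p : PadicInt p) ∣
      (∑ j ∈ Finset.Icc 1 n, Ring.inverse ((j : PadicInt p))) -
        ∑ j ∈ Finset.Icc 1 m, Ring.inverse ((j : PadicInt p)) := by
  have hp : p.Prime := Fact.out
  have hprm : (n : ℤ) + m + 1 = p := by linarith
  have hnm : n + m + 1 = p := by exact_mod_cast hprm
  have hmn : m ≤ n := by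
    have : (m : ℤ) * 3 ≤ n * 3 := by
      rw [hn, hm]; push_cast; omega
    exact_mod_cast (by linarith : (m : ℤ) ≤ n)
  have hodd : p % 2 = 1 := Nat.odd_iff.mp (hp.odd_of_ne_two (by omega))
  -- rewrite the difference of sums as a sum over Ioc m n
  have hsplit : (∑ j ∈ Finset.Icc 1 n, Ring.inverse ((j : PadicInt p))) -
      (∑ j ∈ Finset.Icc 1 m, Ring.inverse ((j : PadicInt p)))
      = ∑ j ∈ Finset.Ioc m n, Ring.inverse ((j : PadicInt p)) := by
    have h1 : Finset.Icc 1 n = Finset.Ioc 0 n := by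
      ext x; simp [Nat.lt_iff_add_one_le]
    have h2 : Finset.Icc 1 m = Finset.Ioc 0 m := by
      ext x; simp [Nat.lt_iff_add_one_le]
    rw [h1, h2, sub_eq_iff_eq_add, add_comm]
    exact (Finset.sum_Ioc_consecutive _ (Nat.zero_le m) hmn).symm
  rw [hsplit]
  -- units
  have hunit : ∀ j ∈ Finset.Ioc m n, IsUnit ((j : PadicInt p)) := by
    intro j hj
    simp only [Finset.mem_Ioc] at hj
    rw [PadicInt.isUnit_iff]
    have hle : ‖((j : ℤ) : PadicInt p)‖ ≤ 1 := PadicInt.norm_le_one _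
    have hnd : ¬ ((p : ℤ) ∣ (j : ℤ)) := by
      rw [Int.natCast_dvd_natCast]
      intro hd
      rcases hd with ⟨c, rfl⟩
      rcases Nat.eq_zero_or_pos c with rfl | hc
      · omega
      · nlinarith [hc, hj.1, hj.2, hnm]
    have := (PadicInt.norm_int_lt_one_iff_dvd (p := p) (j : ℤ)).not.mpr hnd
    push_cast at hle this ⊢
    exact le_antisymm hle (not_lt.mp this)
  -- reduce modulo p via toZMod
  rw [← Ideal.mem_span_singleton, ← PadicInt.maximalIdeal_eq_span_p,
    ← PadicInt.ker_toZMod, RingHom.mem_ker, map_sum]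
  -- compute the image of each inverse
  have himg : ∀ j ∈ Finset.Ioc m n,
      PadicInt.toZMod (Ring.inverse ((j : PadicInt p))) = ((j : ZMod p))⁻¹ := by
    intro j hj
    have h1 : PadicInt.toZMod (Ring.inverse ((j : PadicInt p))) * (j : ZMod p) = 1 := by
      rw [← map_natCast (PadicInt.toZMod : PadicInt p →+* ZMod p) j, ← map_mul,
        Ring.inverse_mul_cancel _ (hunit j hj), map_one]
    exact eq_inv_of_mul_eq_one_left h1
  rw [Finset.sum_congr rfl himg]
  -- now an involution argument in ZMod p
  apply Finset.sum_involution (g := fun j _ => p - j)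
  · intro a ha
    simp only [Finset.mem_Ioc] at ha
    have hap : a ≤ p := by omega
    have hcast : (((p - a : ℕ)) : ZMod p) = - (a : ZMod p) := by
      have : ((p - a : ℕ) : ZMod p) = ((p : ℕ) : ZMod p) - (a : ZMod p) := by
        push_cast [Nat.cast_sub hap]; ring
      rw [this, ZMod.natCast_self]; ring
    rw [hcast, inv_neg]; ring
  · intro a ha _
    simp only [Finset.mem_Ioc] at ha
    omega
  · intro a ha
    simp only [Finset.mem_Ioc] at ha ⊢
    omega
  · intro a ha
    simp only [Finset.mem_Ioc] at ha
    omega
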